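/- Let G ≥ 2, K ≥ 1, and N ≥ 2 be integers, and set p = 1 − 1/G and q = 1/G as reals. If j is an integer with j ≥ 4·K + log N / log G + 2·√(K · (log N / log G)), then for every integer k with 0 ≤ k < K, (choose j k)·p^k·q^(j−k) < 1/N. -/

import Mathlib

set_option maxHeartbeats 1000000

/-- after `J = 4K + log_G N + 2√(K·log_G N)` rounds, the binomial
kernel auto-convolution values fall below `1/N`. -/
theorem dave_J_bound
    (G K N : ℕ) (hG : 2 ≤ G) (hK : 1 ≤ K) (hN : 2 ≤ N)
    (p q : ℝ) (hp : p = 1 - 1 / (G : ℝ)) (hq : q = 1 / (G : ℝ))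
    (j : ℤ)
    (hj : (4 * K + Real.log N / Real.log G
        + 2 * Real.sqrt ((K : ℝ) * (Real.log N / Real.log G)) : ℝ) ≤ (j : ℝ)) :
    ∀ k : ℤ, 0 ≤ k → k < (K : ℤ) →
      (Nat.choose j.toNat k.toNat : ℝ) * p ^ k.toNat * q ^ (j.toNat - k.toNat)
        < 1 / (N : ℝ) := by
  intro k hk0 hkK
  have hG1 : (1:ℝ) < (G:ℝ) := by exact_mod_cast lt_of_lt_of_le one_lt_two hG
  have hG0 : (0:ℝ) < (G:ℝ) := zero_lt_one.trans hG1
  have hG2 : (2:ℝ) ≤ (G:ℝ) := by exact_mod_cast hG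
  have hN1 : (1:ℝ) < (N:ℝ) := by exact_mod_cast lt_of_lt_of_le one_lt_two hN
  have hN0 : (0:ℝ) < (N:ℝ) := zero_lt_one.trans hN1
  have hlogN : 0 < Real.log N := Real.log_pos hN1
  set g : ℝ := Real.log G with hgdef
  have hg : 0 < g := Real.log_pos hG1
  set L : ℝ := Real.log N / g with hLdef
  have hL : 0 < L := div_pos hlogN hg
  set s : ℝ := Real.sqrt ((K:ℝ) * L) with hsdef
  have hs : 0 ≤ s := Real.sqrt_nonneg _
  have hK1 : (1:ℝ) ≤ (K:ℝ) := by exact_mod_cast hK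
  have hK0 : (0:ℝ) < (K:ℝ) := lt_of_lt_of_le zero_lt_one hK1
  have hKne : (K:ℝ) ≠ 0 := ne_of_gt hK0
  have hs2 : s * s = (K:ℝ) * L := Real.mul_self_sqrt (by positivity)
  have hJ0pos : (0:ℝ) < 4 * K + L + 2 * s := by linarith
  set t : ℝ := (K:ℝ) / (4 * K + L + 2 * s) with htdef
  have ht0 : 0 < t := div_pos hK0 hJ0pos
  have ht1 : t ≤ 1/4 := by
    rw [htdef, div_le_iff₀ hJ0pos]; linarith
  have hlog2g : Real.log 2 ≤ g := by
    rw [hgdef]; exact Real.log_le_log (by norm_num) hG2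
  have htg : t < g := by
    have h14 : (1/4:ℝ) < Real.log 2 := by linarith [Real.log_two_gt_d9]
    linarith
  have hq0 : 0 < q := by rw [hq]; positivity
  have h12 : 1/(G:ℝ) ≤ 1/2 := by
    rw [div_le_div_iff₀ hG0 (by norm_num)]; linarith
  have hp0 : 0 < p := by rw [hp]; linarith
  have hlogp : Real.log p ≤ -(1/(G:ℝ)) := by
    have h := Real.log_le_sub_one_of_pos hp0
    rw [hp] at h ⊢; linarith
  have hgp : 0 ≤ g + Real.log p := by
    have h1 : Real.log (p * G) = Real.log p + Real.log G :=
      Real.log_mul (ne_of_gt hp0) (ne_of_gt hG0)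
    have h2 : p * G = (G:ℝ) - 1 := by rw [hp]; field_simp
    have h3 : 0 ≤ Real.log (p * G) := Real.log_nonneg (by rw [h2]; linarith)
    rw [h1] at h3; rw [hgdef]; linarith
  have hlogt0 : Real.log t ≤ 0 := Real.log_nonpos ht0.le (by linarith)
  have hlogt : Real.log t = Real.log K - Real.log (4 * K + L + 2 * s) := by
    rw [htdef, Real.log_div hKne (ne_of_gt hJ0pos)]
  have hJle : 4 * (K:ℝ) + L + 2 * s ≤ (2 + s/K)^2 * K := by
    have hexp : (2 + s/K)^2 * (K:ℝ) = 4*K + 4*s + L := by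
      field_simp
      linear_combination hs2
    rw [hexp]; linarith
  have hlogJ0 : Real.log (4 * (K:ℝ) + L + 2 * s) ≤ Real.log K + 2 * Real.log (2 + s/K) := by
    have h1 : Real.log (4 * (K:ℝ) + L + 2 * s) ≤ Real.log ((2 + s/K)^2 * K) :=
      Real.log_le_log hJ0pos hJle
    rw [Real.log_mul (by positivity) hKne, Real.log_pow] at h1
    push_cast at h1
    linarith
  have hlog2s : Real.log (2 + s/K) ≤ Real.log 2 + (s/K)/2 := by
    have h1 : Real.log ((2 + s/K)/2) ≤ (2 + s/K)/2 - 1 :=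
      Real.log_le_sub_one_of_pos (by positivity)
    rw [Real.log_div (by positivity) two_ne_zero] at h1
    linarith
  -- casts
  have hjpos : 0 ≤ j := by
    by_contra h
    push_neg at h
    have : (j:ℝ) < 0 := by exact_mod_cast h
    linarith
  have hm : ((j.toNat : ℕ) : ℝ) = (j:ℝ) := by
    rw [← Int.cast_natCast, Int.toNat_of_nonneg hjpos]
  have hn : ((k.toNat : ℕ) : ℝ) = (k:ℝ) := by
    rw [← Int.cast_natCast, Int.toNat_of_nonneg hk0]
  have hkK' : (k:ℝ) ≤ (K:ℝ) - 1 := by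
    have h1 : k + 1 ≤ (K:ℤ) := hkK
    have h2 : ((k:ℝ) + 1) ≤ (K:ℝ) := by exact_mod_cast h1
    linarith
  have hmJ : 4 * (K:ℝ) + L + 2 * s ≤ ((j.toNat : ℕ) : ℝ) := by rw [hm]; exact hj
  have hnm : k.toNat ≤ j.toNat := by
    apply Int.toNat_le_toNat
    have : (k:ℝ) ≤ (j:ℝ) := by linarith
    exact_mod_cast this
  have hnK : ((k.toNat : ℕ) : ℝ) ≤ (K:ℝ) - 1 := by rw [hn]; exact hkK'
  set m : ℕ := j.toNat
  set n : ℕ := k.toNat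
  have hlogq : Real.log q = -g := by rw [hq, hgdef, one_div, Real.log_inv]
  -- the key exponent inequality
  have hE : t*(m:ℝ) - (n:ℝ)*Real.log t + (n:ℝ)*Real.log p + ((m-n : ℕ):ℝ)*Real.log q
      < -Real.log N := by
    have hcast : ((m-n : ℕ):ℝ) = (m:ℝ) - (n:ℝ) := by
      rw [Nat.cast_sub hnm]
    rw [hcast, hlogq]
    have e1 : t*(m:ℝ) - g*(m:ℝ) ≤ K - 4*K*g - L*g - 2*s*g := by
      have h2 : t * (4 * (K:ℝ) + L + 2 * s) = K := by
        rw [htdef, div_mul_cancel₀ _ (ne_of_gt hJ0pos)]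
      have h3 : 0 ≤ (g - t) * ((m:ℝ) - (4 * (K:ℝ) + L + 2 * s)) :=
        mul_nonneg (sub_nonneg.mpr htg.le) (sub_nonneg.mpr hmJ)
      linarith [h2, h3]
    have e2 : (n:ℝ) * (g - Real.log t + Real.log p) ≤ (K:ℝ) * (g - Real.log t + Real.log p) := by
      apply mul_le_mul_of_nonneg_right (by linarith) (by linarith)
    have e3 : g - Real.log t + Real.log p ≤ g + 2*Real.log 2 + (s/K) - 1/G := by
      rw [hlogt]; linarith
    have e23 : (K:ℝ) * (g - Real.log t + Real.log p)
        ≤ (K:ℝ) * (g + 2*Real.log 2 + (s/K) - 1/G) :=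
      mul_le_mul_of_nonneg_left e3 hK0.le
    have e4 : (K:ℝ) * (g + 2*Real.log 2 + (s/K) - 1/G)
        = K*g + 2*K*Real.log 2 + s - K*(1/G) := by
      field_simp
    have e5 : L * g = Real.log N := by rw [hLdef]; field_simp
    have hfinal : (K:ℝ) + 2*K*Real.log 2 + s - K*(1/G) - 3*K*g - 2*s*g < 0 := by
      rcases eq_or_lt_of_le hG2 with hG2' | hG3
      · have hgeq : g = Real.log 2 := by rw [hgdef, ← hG2']
        have hb1 : s*(1 - 2*Real.log 2) ≤ 0 :=
          mul_nonpos_of_nonneg_of_nonpos hs (by linarith [Real.log_two_gt_d9])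
        have hb2 : (K:ℝ)*(1/2 - Real.log 2) < 0 :=
          mul_neg_of_pos_of_neg hK0 (by linarith [Real.log_two_gt_d9])
        rw [← hG2', hgeq]
        linarith [hb1, hb2]
      · have hg3 : Real.log 3 ≤ g := by
          rw [hgdef]
          apply Real.log_le_log (by norm_num)
          have : (3:ℕ) ≤ G := by exact_mod_cast hG3
          exact_mod_cast this
        have h1log3 : (1:ℝ) < Real.log 3 := by
          rw [Real.lt_log_iff_exp_lt (by norm_num)]
          calc Real.exp 1 < 2.7182818286 := Real.exp_one_lt_d9
            _ < 3 := by norm_num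
        have hb1 : s*(1 - 2*g) ≤ 0 :=
          mul_nonpos_of_nonneg_of_nonpos hs (by linarith)
        have hb2 : (K:ℝ)*(1 + 2*Real.log 2 - 3*g) < 0 :=
          mul_neg_of_pos_of_neg hK0 (by linarith [Real.log_two_lt_d9])
        have hb3 : 0 < (K:ℝ) * (1/G) := by positivity
        linarith [hb1, hb2, hb3]
    linarith [e1, e2, e23, e4.le, e4.ge, e5.le, e5.ge, hfinal]
  -- the multiplicative chain
  have hchain : (Nat.choose m n : ℝ) * p^n * q^(m-n)
      ≤ Real.exp (t*(m:ℝ) - (n:ℝ)*Real.log t + (n:ℝ)*Real.log p + ((m-n : ℕ):ℝ)*Real.log q) := by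
    have c1 : (Nat.choose m n : ℝ) ≤ Real.exp (t*m) / t^n := by
      refine (Nat.choose_le_pow_div n m).trans ?_
      rw [div_le_div_iff₀ (by positivity) (by positivity)]
      have h1 := Real.pow_div_factorial_le_exp (x := t*(m:ℝ)) (by positivity) n
      rw [div_le_iff₀ (by positivity)] at h1
      calc (m:ℝ)^n * t^n = (t*(m:ℝ))^n := by rw [← mul_pow]; ring_nf
        _ ≤ Real.exp (t*(m:ℝ)) * (n.factorial : ℝ) := h1
    have c2 : (Nat.choose m n : ℝ) * p^n * q^(m-n)
        ≤ (Real.exp (t*(m:ℝ)) / t^n) * p^n * q^(m-n) := by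
      apply mul_le_mul_of_nonneg_right _ (pow_nonneg hq0.le _)
      exact mul_le_mul_of_nonneg_right c1 (pow_nonneg hp0.le _)
    refine c2.trans (le_of_eq ?_)
    have hpow : ∀ (x:ℝ), 0 < x → ∀ r:ℕ, x^r = Real.exp ((r:ℝ) * Real.log x) := by
      intro x hx r
      rw [Real.exp_nat_mul, Real.exp_log hx]
    rw [hpow t ht0 n, hpow p hp0 n, hpow q hq0 (m-n), ← Real.exp_sub, ← Real.exp_add,
      ← Real.exp_add]
  have hlt : Real.exp (t*(m:ℝ) - (n:ℝ)*Real.log t + (n:ℝ)*Real.log p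
      + ((m-n : ℕ):ℝ)*Real.log q) < 1 / (N:ℝ) := by
    rw [show (1:ℝ)/(N:ℝ) = Real.exp (-(Real.log N)) by
      rw [Real.exp_neg, Real.exp_log hN0, one_div]]
    exact Real.exp_lt_exp.mpr hE
  exact lt_of_le_of_lt hchain hlt
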